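/- On the region R := {(a,b,c) ∈ (0,1)³ : a ≥ 1/2, b ≥ 1/2, c ≥ a, c ≥ b}, the function g(a,b,c) := a·b·(1−c) + (1−a)·(1−b)·c is nonincreasing in each of its three arguments separately (when the other two are held fixed and both points lie in R). Consequently, for n = 3, the spectral gap λ_K = (1/2)·(1 − g(p_{12}, p_{23}, p_{13})^{1/2}) is nondecreasing in each of p_{12}, p_{23}, p_{13} as p ranges over regular parameter vectors. -/
import Mathlib


/-- The function `g(a,b,c) = a·b·(1-c) + (1-a)·(1-b)·c` (for `n = 3`,
`λ_K = (1/2)(1 - √(g(p₁₂, p₂₃, p₁₃)))`). -/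
def g3 (a b c : ℝ) : ℝ := a * b * (1 - c) + (1 - a) * (1 - b) * c

/-- The region `R`: `(a,b,c) ∈ (0,1)³` with `a ≥ 1/2`, `b ≥ 1/2`, `c ≥ a`, `c ≥ b`
(regularity for `n = 3` with `a = p₁₂`, `b = p₂₃`, `c = p₁₃`). -/
def reg3 (a b c : ℝ) : Prop :=
  a ∈ Set.Ioo (0 : ℝ) 1 ∧ b ∈ Set.Ioo (0 : ℝ) 1 ∧ c ∈ Set.Ioo (0 : ℝ) 1 ∧
    1 / 2 ≤ a ∧ 1 / 2 ≤ b ∧ a ≤ c ∧ b ≤ c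

lemma g3_a (a a' b c : ℝ) (h : reg3 a b c) (h' : reg3 a' b c) (hle : a ≤ a') :
    g3 a' b c ≤ g3 a b c := by
  obtain ⟨-, -, -, -, -, -, hbc⟩ := h
  unfold g3; nlinarith

lemma g3_b (a b b' c : ℝ) (h : reg3 a b c) (h' : reg3 a b' c) (hle : b ≤ b') :
    g3 a b' c ≤ g3 a b c := by
  obtain ⟨-, -, -, -, -, hac, -⟩ := h
  unfold g3; nlinarith

lemma g3_c (a b c c' : ℝ) (h : reg3 a b c) (h' : reg3 a b c') (hle : c ≤ c') :
    g3 a b c' ≤ g3 a b c := by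
  obtain ⟨-, -, -, ha, hb, -, -⟩ := h
  unfold g3; nlinarith

/-- on the region `R`, the function `g` is nonincreasing in each of its
three arguments separately; consequently, for `n = 3`, the spectral gap
`λ_K = (1/2)(1 - √(g(p₁₂, p₂₃, p₁₃)))` is nondecreasing in each of `p₁₂`, `p₂₃`, `p₁₃`
as `p` ranges over regular parameter vectors. -/
theorem g3_antitone_gap_monotone :
    (∀ a a' b c : ℝ, reg3 a b c → reg3 a' b c → a ≤ a' → g3 a' b c ≤ g3 a b c) ∧
    (∀ a b b' c : ℝ, reg3 a b c → reg3 a b' c → b ≤ b' → g3 a b' c ≤ g3 a b c) ∧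
    (∀ a b c c' : ℝ, reg3 a b c → reg3 a b c' → c ≤ c' → g3 a b c' ≤ g3 a b c) ∧
    (∀ a a' b c : ℝ, reg3 a b c → reg3 a' b c → a ≤ a' →
      (1 / 2) * (1 - Real.sqrt (g3 a b c)) ≤ (1 / 2) * (1 - Real.sqrt (g3 a' b c))) ∧
    (∀ a b b' c : ℝ, reg3 a b c → reg3 a b' c → b ≤ b' →
      (1 / 2) * (1 - Real.sqrt (g3 a b c)) ≤ (1 / 2) * (1 - Real.sqrt (g3 a b' c))) ∧
    (∀ a b c c' : ℝ, reg3 a b c → reg3 a b c' → c ≤ c' →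
      (1 / 2) * (1 - Real.sqrt (g3 a b c)) ≤ (1 / 2) * (1 - Real.sqrt (g3 a b c'))) := by
  refine ⟨g3_a, g3_b, g3_c, ?_, ?_, ?_⟩
  · intro a a' b c h h' hle
    have := Real.sqrt_le_sqrt (g3_a a a' b c h h' hle)
    linarith
  · intro a b b' c h h' hle
    have := Real.sqrt_le_sqrt (g3_b a b b' c h h' hle)
    linarith
  · intro a b c c' h h' hle
    have := Real.sqrt_le_sqrt (g3_c a b c c' h h' hle)
    linarith
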